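/- Let σ(x) = 1/(1+e^{−x}), and for s ≥ 1 define ψ^s : ℝ → ℝ by ψ^s(x) = σ(s(x + 3/2)) − σ(s(x − 3/2)); for N ∈ ℕ, d ∈ ℕ and m ∈ {0,…,N}^d define φ^s_m : ℝ^d → ℝ by φ^s_m(x) = ∏_{l=1}^d ψ^s(3N(x_l − m_l/N)). Then for every d ∈ ℕ and k ∈ ℕ₀ there exists a constant C = C(k, d) > 0 such that for all N ∈ ℕ, all s ≥ 1, all m ∈ {0,…,N}^d, every multi-index α with |α| ≤ k and every x ∈ ℝ^d with ‖x − m/N‖_∞ ≥ 1/N, |D^α φ^s_m(x)| ≤ C·N^k·s^k·e^{−s}. (Exponential decay of the bump functions outside their patch.) -/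

import Mathlib

/-- Iterated partial derivative `D^α` in the directions listed in `u` (a multi-index `α`
with `|α| = u.length`). -/
noncomputable def multiDeriv {d : ℕ} : List (Fin d) → ((Fin d → ℝ) → ℝ) → ((Fin d → ℝ) → ℝ)
  | [], f => f
  | i :: u, f => fun x => fderiv ℝ (multiDeriv u f) x (Pi.single i 1)

/-- The sigmoid (logistic) function. -/
noncomputable def sigmoid (x : ℝ) : ℝ := 1 / (1 + Real.exp (-x))

/-- The one-dimensional approximate bump `ψ^s(x) = σ(s(x+3/2)) - σ(s(x-3/2))`. -/
noncomputable def psiSig (s x : ℝ) : ℝ :=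
  sigmoid (s * (x + 3 / 2)) - sigmoid (s * (x - 3 / 2))

/-- The multi-dimensional bump `φ^s_m(x) = ∏_l ψ^s(3N(x_l - m_l/N))`. -/
noncomputable def bump (d N : ℕ) (s : ℝ) (m : Fin d → ℕ) (x : Fin d → ℝ) : ℝ :=
  ∏ l : Fin d, psiSig s (3 * (N : ℝ) * (x l - (m l : ℝ) / (N : ℝ)))

lemma one_add_exp_pos (x : ℝ) : 0 < 1 + Real.exp (-x) := by positivity

lemma one_add_exp_ne (x : ℝ) : 1 + Real.exp (-x) ≠ 0 := (one_add_exp_pos x).ne'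

lemma sigmoid_pos (x : ℝ) : 0 < sigmoid x := by
  unfold sigmoid; positivity

lemma sigmoid_lt_one (x : ℝ) : sigmoid x < 1 := by
  unfold sigmoid
  rw [div_lt_one (one_add_exp_pos x)]
  linarith [Real.exp_pos (-x)]

lemma sigmoid_le_exp (x : ℝ) : sigmoid x ≤ Real.exp x := by
  unfold sigmoid
  rw [div_le_iff₀ (one_add_exp_pos x)]
  have h := Real.exp_pos x
  have : Real.exp x * Real.exp (-x) = 1 := by
    rw [← Real.exp_add]; simp
  nlinarith

lemma one_sub_sigmoid (x : ℝ) : 1 - sigmoid x = Real.exp (-x) / (1 + Real.exp (-x)) := by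
  unfold sigmoid; field_simp; ring

lemma one_sub_sigmoid_le_exp (x : ℝ) : 1 - sigmoid x ≤ Real.exp (-x) := by
  rw [one_sub_sigmoid]
  rw [div_le_iff₀ (one_add_exp_pos x)]
  nlinarith [Real.exp_pos (-x)]

lemma sigmoid_hasDerivAt (x : ℝ) :
    HasDerivAt sigmoid (sigmoid x * (1 - sigmoid x)) x := by
  have h1 : HasDerivAt (fun x : ℝ => 1 + Real.exp (-x)) (-Real.exp (-x)) x := by
    have := (Real.hasDerivAt_exp (-x)).comp x (hasDerivAt_neg x)
    simpa using (this.const_add 1)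
  have h2 := h1.inv (one_add_exp_ne x)
  have : sigmoid = fun x : ℝ => (1 + Real.exp (-x))⁻¹ := by
    funext y; unfold sigmoid; rw [one_div]
  rw [this]
  refine h2.congr_deriv ?_
  beta_reduce
  have hne := one_add_exp_ne x
  field_simp
  ring

lemma contDiff_sigmoid' : ContDiff ℝ ⊤ sigmoid := by
  unfold sigmoid
  exact ContDiff.div contDiff_const
    (contDiff_const.add (Real.contDiff_exp.comp contDiff_neg)) one_add_exp_ne
open Polynomial in
lemma sig_poly (n : ℕ) : ∃ p : Polynomial ℝ, ∀ y,
    iteratedDeriv (n + 1) sigmoid y = sigmoid y * (1 - sigmoid y) * p.eval (sigmoid y) := by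
  induction n with
  | zero =>
    refine ⟨1, fun y => ?_⟩
    rw [iteratedDeriv_one, (sigmoid_hasDerivAt y).deriv]
    simp
  | succ n ih =>
    obtain ⟨p, hp⟩ := ih
    refine ⟨(1 - 2 * X) * p + X * (1 - X) * p.derivative, fun y => ?_⟩
    rw [iteratedDeriv_succ]
    have hfun : iteratedDeriv (n + 1) sigmoid =
        fun y => (X * (1 - X) * p : Polynomial ℝ).eval (sigmoid y) := by
      funext z; rw [hp z]; simp only [Polynomial.eval_mul, Polynomial.eval_sub,
        Polynomial.eval_one, Polynomial.eval_X]
    rw [hfun]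
    have hσ := sigmoid_hasDerivAt y
    have h1 := ((X * (1 - X) * p : Polynomial ℝ).hasDerivAt (sigmoid y)).comp y hσ
    have h2 : HasDerivAt (fun y => (X * (1 - X) * p : Polynomial ℝ).eval (sigmoid y))
        ((X * (1 - X) * p : Polynomial ℝ).derivative.eval (sigmoid y) *
          (sigmoid y * (1 - sigmoid y))) y := h1
    rw [h2.deriv]
    simp [Polynomial.derivative_mul]
    ring
lemma sig_prod_le (y : ℝ) : sigmoid y * (1 - sigmoid y) ≤ Real.exp (-|y|) := by
  have h1 := sigmoid_pos y
  have h2 := sigmoid_lt_one y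
  rcases le_or_gt 0 y with h | h
  · rw [abs_of_nonneg h]
    calc sigmoid y * (1 - sigmoid y) ≤ 1 * (1 - sigmoid y) := by nlinarith
    _ ≤ Real.exp (-y) := by rw [one_mul]; exact one_sub_sigmoid_le_exp y
  · rw [abs_of_neg h, neg_neg]
    calc sigmoid y * (1 - sigmoid y) ≤ sigmoid y * 1 := by nlinarith
    _ ≤ Real.exp y := by rw [mul_one]; exact sigmoid_le_exp y

lemma sig_iter_bound (n : ℕ) : ∃ C : ℝ, 0 < C ∧ ∀ y,
    |iteratedDeriv (n + 1) sigmoid y| ≤ C * Real.exp (-|y|) := by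
  obtain ⟨p, hp⟩ := sig_poly n
  obtain ⟨B, hB⟩ := (isCompact_Icc (a := (0:ℝ)) (b := 1)).exists_bound_of_continuousOn
    (p.continuous.continuousOn)
  have hB0 : 0 ≤ B := le_trans (norm_nonneg _) (hB 0 (by norm_num))
  refine ⟨B + 1, by linarith, fun y => ?_⟩
  rw [hp y]
  have h1 := sigmoid_pos y
  have h2 := sigmoid_lt_one y
  have hmem : sigmoid y ∈ Set.Icc (0:ℝ) 1 := ⟨h1.le, h2.le⟩
  have hev : |p.eval (sigmoid y)| ≤ B := hB _ hmem
  have hprod := sig_prod_le y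
  have hprodpos : 0 < sigmoid y * (1 - sigmoid y) := by nlinarith
  calc |sigmoid y * (1 - sigmoid y) * p.eval (sigmoid y)|
      = sigmoid y * (1 - sigmoid y) * |p.eval (sigmoid y)| := by
        rw [abs_mul, abs_of_pos hprodpos]
    _ ≤ Real.exp (-|y|) * B := by
        apply mul_le_mul hprod hev (abs_nonneg _) (Real.exp_pos _).le
    _ ≤ (B + 1) * Real.exp (-|y|) := by
        have := Real.exp_pos (-|y|)
        nlinarith
lemma contDiff_psi (s : ℝ) : ContDiff ℝ ⊤ (psiSig s) := by
  unfold psiSig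
  apply ContDiff.sub
  · exact contDiff_sigmoid'.comp (contDiff_const.mul (contDiff_id.add contDiff_const))
  · exact contDiff_sigmoid'.comp (contDiff_const.mul (contDiff_id.sub contDiff_const))

lemma sig_iter_diff (n : ℕ) : Differentiable ℝ (iteratedDeriv n sigmoid) :=
  contDiff_sigmoid'.differentiable_iteratedDeriv n (by
    exact_mod_cast WithTop.coe_lt_top (n : ℕ∞))

lemma psi_iter (s : ℝ) (n : ℕ) (x : ℝ) :
    iteratedDeriv n (psiSig s) x =
      s ^ n * (iteratedDeriv n sigmoid (s * (x + 3 / 2)) -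
        iteratedDeriv n sigmoid (s * (x - 3 / 2))) := by
  induction n generalizing x with
  | zero => simp [psiSig]
  | succ n ih =>
    rw [iteratedDeriv_succ]
    have hfun : iteratedDeriv n (psiSig s) = fun x =>
        s ^ n * (iteratedDeriv n sigmoid (s * (x + 3 / 2)) -
          iteratedDeriv n sigmoid (s * (x - 3 / 2))) := funext fun z => ih z
    rw [hfun]
    have ha : HasDerivAt (fun x : ℝ => s * (x + 3 / 2)) s x := by
      simpa using ((hasDerivAt_id x).add_const (3/2:ℝ)).const_mul s
    have hb : HasDerivAt (fun x : ℝ => s * (x - 3 / 2)) s x := by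
      simpa using ((hasDerivAt_id x).sub_const (3/2:ℝ)).const_mul s
    have hga : HasDerivAt (iteratedDeriv n sigmoid)
        (iteratedDeriv (n+1) sigmoid (s * (x + 3/2))) (s * (x + 3/2)) := by
      rw [iteratedDeriv_succ]
      exact ((sig_iter_diff n) (s * (x + 3/2))).hasDerivAt
    have hgb : HasDerivAt (iteratedDeriv n sigmoid)
        (iteratedDeriv (n+1) sigmoid (s * (x - 3/2))) (s * (x - 3/2)) := by
      rw [iteratedDeriv_succ]
      exact ((sig_iter_diff n) (s * (x - 3/2))).hasDerivAt
    have h1 := (hga.comp x ha).sub (hgb.comp x hb)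
    have h2 := h1.const_mul (s ^ n)
    refine h2.deriv.trans ?_
    ring
lemma psi_iter_hasDerivAt (s : ℝ) (c : ℕ) (y : ℝ) :
    HasDerivAt (iteratedDeriv c (psiSig s)) (iteratedDeriv (c + 1) (psiSig s) y) y := by
  have hdiff : Differentiable ℝ (iteratedDeriv c (psiSig s)) :=
    (contDiff_psi s).differentiable_iteratedDeriv c
      (by exact_mod_cast WithTop.coe_lt_top (c : ℕ∞))
  rw [iteratedDeriv_succ]
  exact (hdiff y).hasDerivAt

lemma multiDeriv_bump (d N : ℕ) (s : ℝ) (m : Fin d → ℕ) (u : List (Fin d)) :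
    multiDeriv u (bump d N s m) = fun x => ∏ l : Fin d,
      ((3 * (N : ℝ)) ^ (u.count l) *
        iteratedDeriv (u.count l) (psiSig s) (3 * (N : ℝ) * (x l - (m l : ℝ) / (N : ℝ)))) := by
  induction u with
  | nil =>
    funext x
    simp [multiDeriv, bump]
  | cons i u ih =>
    funext x
    have hcount : ∀ l : Fin d, (i :: u).count l = u.count l + if l = i then 1 else 0 := by
      intro l
      by_cases h : l = i <;> simp [List.count_cons, h, @eq_comm _ i l]
    -- the factor functions of one real variable
    set g : Fin d → ℝ → ℝ := fun l t =>
      (3 * (N : ℝ)) ^ (u.count l) *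
        iteratedDeriv (u.count l) (psiSig s) (3 * (N : ℝ) * (t - (m l : ℝ) / (N : ℝ))) with hg
    set g' : Fin d → ℝ → ℝ := fun l t =>
      (3 * (N : ℝ)) ^ (u.count l) *
        (iteratedDeriv (u.count l + 1) (psiSig s) (3 * (N : ℝ) * (t - (m l : ℝ) / (N : ℝ)))
          * (3 * (N : ℝ))) with hg'
    have hgd : ∀ (l : Fin d) (t : ℝ), HasDerivAt (g l) (g' l t) t := by
      intro l t
      have hinner : HasDerivAt (fun t : ℝ => 3 * (N : ℝ) * (t - (m l : ℝ) / (N : ℝ)))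
          (3 * (N : ℝ)) t := by
        simpa using ((hasDerivAt_id t).sub_const ((m l : ℝ) / (N : ℝ))).const_mul (3 * (N : ℝ))
      have hiter := psi_iter_hasDerivAt s (u.count l)
        (3 * (N : ℝ) * (t - (m l : ℝ) / (N : ℝ)))
      exact ((hiter.comp t hinner).const_mul _)
    -- full fderiv of the product
    have hF : ∀ l : Fin d, HasFDerivAt (fun x : Fin d → ℝ => g l (x l))
        (g' l (x l) • (ContinuousLinearMap.proj l : (Fin d → ℝ) →L[ℝ] ℝ)) x := by
      intro l
      have hproj : HasFDerivAt (fun y : Fin d → ℝ => y l)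
          (ContinuousLinearMap.proj l : (Fin d → ℝ) →L[ℝ] ℝ) x :=
        (ContinuousLinearMap.proj (R := ℝ) (φ := fun _ : Fin d => ℝ) l).hasFDerivAt
      have hcomp := (hgd l (x l)).comp_hasFDerivAt x hproj
      exact hcomp
    have htot := HasFDerivAt.finset_prod (u := Finset.univ) (fun l _ => hF l)
    show fderiv ℝ (multiDeriv u (bump d N s m)) x (Pi.single i 1) = _
    rw [ih]
    have heq : (fun x : Fin d → ℝ => ∏ l : Fin d,
        ((3 * (N : ℝ)) ^ (u.count l) *
          iteratedDeriv (u.count l) (psiSig s) (3 * (N : ℝ) * (x l - (m l : ℝ) / (N : ℝ)))))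
        = (∏ l ∈ Finset.univ, (fun x : Fin d → ℝ => g l (x l)) ·) := by
      funext y; simp [hg]
    rw [heq, htot.fderiv]
    rw [ContinuousLinearMap.sum_apply]
    have happly : ∀ l : Fin d,
        ((∏ j ∈ Finset.univ.erase l, g j (x j)) •
          (g' l (x l) • (ContinuousLinearMap.proj l : (Fin d → ℝ) →L[ℝ] ℝ)))
            (Pi.single i (1:ℝ))
        = (∏ j ∈ Finset.univ.erase l, g j (x j)) * g' l (x l) * (if l = i then 1 else 0) := by
      intro l
      simp [ContinuousLinearMap.proj_apply, Pi.single_apply, smul_eq_mul]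
    calc (∑ l : Fin d, ((∏ j ∈ Finset.univ.erase l, g j (x j)) •
            (g' l (x l) • (ContinuousLinearMap.proj l : (Fin d → ℝ) →L[ℝ] ℝ)))
              (Pi.single i (1:ℝ)))
        = ∑ l : Fin d, (∏ j ∈ Finset.univ.erase l, g j (x j)) * g' l (x l) *
            (if l = i then 1 else 0) := by
          exact Finset.sum_congr rfl fun l _ => happly l
      _ = (∏ j ∈ Finset.univ.erase i, g j (x j)) * g' i (x i) := by
          rw [Finset.sum_eq_single i]
          · simp
          · intro l _ hl; simp [hl]
          · intro h; exact absurd (Finset.mem_univ i) h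
      _ = ∏ l : Fin d, ((3 * (N : ℝ)) ^ ((i :: u).count l) *
            iteratedDeriv ((i :: u).count l) (psiSig s)
              (3 * (N : ℝ) * (x l - (m l : ℝ) / (N : ℝ)))) := by
          rw [← Finset.mul_prod_erase Finset.univ _ (Finset.mem_univ i)]
          have h1 : ∀ j ∈ Finset.univ.erase i,
              ((3 * (N : ℝ)) ^ ((i :: u).count j) *
                iteratedDeriv ((i :: u).count j) (psiSig s)
                  (3 * (N : ℝ) * (x j - (m j : ℝ) / (N : ℝ)))) = g j (x j) := by
            intro j hj
            have hji : j ≠ i := (Finset.mem_erase.mp hj).1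
            rw [hcount j, if_neg hji, add_zero, hg]
          rw [Finset.prod_congr rfl h1]
          have h2 : (i :: u).count i = u.count i + 1 := by rw [hcount i, if_pos rfl]
          rw [h2]
          simp only [hg, hg', pow_succ]
          ring
lemma psi_bound (k : ℕ) : ∃ C : ℝ, 0 < C ∧ ∀ s : ℝ, 1 ≤ s → ∀ n, n ≤ k → ∀ x : ℝ,
    (|iteratedDeriv n (psiSig s) x| ≤ C * s ^ n) ∧
    (3 ≤ |x| → |iteratedDeriv n (psiSig s) x| ≤ C * s ^ n * Real.exp (-s)) := by
  choose F hFpos hF using sig_iter_bound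
  set C : ℝ := 2 + 2 * ∑ j ∈ Finset.range k, F j with hC
  have hsum_nonneg : 0 ≤ ∑ j ∈ Finset.range k, F j :=
    Finset.sum_nonneg fun j _ => (hFpos j).le
  have hCpos : 0 < C := by rw [hC]; linarith
  refine ⟨C, hCpos, fun s hs n hn x => ?_⟩
  have hspos : (0:ℝ) < s := lt_of_lt_of_le one_pos hs
  have hsn : (0:ℝ) < s ^ n := pow_pos hspos n
  set a := s * (x + 3/2) with ha
  set b := s * (x - 3/2) with hb
  have habs : 3 ≤ |x| → s ≤ |a| ∧ s ≤ |b| := by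
    intro hx
    rcases le_abs.mp hx with hx3 | hx3
    · have p1 := mul_le_mul_of_nonneg_left (show (1:ℝ) ≤ x + 3/2 by linarith) hspos.le
      have p2 := mul_le_mul_of_nonneg_left (show (1:ℝ) ≤ x - 3/2 by linarith) hspos.le
      constructor
      · rw [ha, abs_of_nonneg (by linarith)]; linarith
      · rw [hb, abs_of_nonneg (by linarith)]; linarith
    · have p1 := mul_le_mul_of_nonneg_left (show x + 3/2 ≤ (-1:ℝ) by linarith) hspos.le
      have p2 := mul_le_mul_of_nonneg_left (show x - 3/2 ≤ (-1:ℝ) by linarith) hspos.le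
      constructor
      · rw [ha, abs_of_nonpos (by linarith)]; linarith
      · rw [hb, abs_of_nonpos (by linarith)]; linarith
  rw [psi_iter, abs_mul, abs_of_pos hsn]
  match n with
  | 0 =>
    simp only [iteratedDeriv_zero, pow_zero, one_mul, mul_one]
    have h2 : |sigmoid a - sigmoid b| ≤ 2 := by
      have := sigmoid_pos a; have := sigmoid_lt_one a
      have := sigmoid_pos b; have := sigmoid_lt_one b
      rw [abs_le]; constructor <;> nlinarith
    constructor
    · calc |sigmoid a - sigmoid b| ≤ 2 := h2
        _ ≤ C := by rw [hC]; linarith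
    · intro hx
      obtain ⟨hA, hB⟩ := habs hx
      rcases le_abs.mp hx with hx3 | hx3
      · have hae : (1 - sigmoid a) ≤ Real.exp (-s) := by
          have h1 : 1 - sigmoid a ≤ Real.exp (-a) := one_sub_sigmoid_le_exp a
          have h2a : s ≤ a := by
            rw [ha]
            have := mul_le_mul_of_nonneg_left (show (1:ℝ) ≤ x + 3/2 by linarith) hspos.le
            linarith
          have : Real.exp (-a) ≤ Real.exp (-s) := Real.exp_le_exp.mpr (by linarith)
          linarith
        have hbe : (1 - sigmoid b) ≤ Real.exp (-s) := by
          have h1 : 1 - sigmoid b ≤ Real.exp (-b) := one_sub_sigmoid_le_exp b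
          have h2b : s ≤ b := by
            rw [hb]
            have := mul_le_mul_of_nonneg_left (show (1:ℝ) ≤ x - 3/2 by linarith) hspos.le
            linarith
          have : Real.exp (-b) ≤ Real.exp (-s) := Real.exp_le_exp.mpr (by linarith)
          linarith
        have habs2 : |sigmoid a - sigmoid b| ≤ (1 - sigmoid a) + (1 - sigmoid b) := by
          rw [abs_le]
          constructor <;> nlinarith [sigmoid_pos a, sigmoid_pos b,
            sigmoid_lt_one a, sigmoid_lt_one b]
        calc |sigmoid a - sigmoid b| ≤ 2 * Real.exp (-s) := by linarith
          _ ≤ C * Real.exp (-s) := by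
              have h2C : (2:ℝ) ≤ C := by rw [hC]; linarith
              exact mul_le_mul_of_nonneg_right h2C (Real.exp_pos (-s)).le
      · have hae : sigmoid a ≤ Real.exp (-s) := by
          have h1 : sigmoid a ≤ Real.exp a := sigmoid_le_exp a
          have h2a : a ≤ -s := by
            rw [ha]
            have := mul_le_mul_of_nonneg_left (show x + 3/2 ≤ (-1:ℝ) by linarith) hspos.le
            linarith
          have : Real.exp a ≤ Real.exp (-s) := Real.exp_le_exp.mpr h2a
          linarith
        have hbe : sigmoid b ≤ Real.exp (-s) := by
          have h1 : sigmoid b ≤ Real.exp b := sigmoid_le_exp b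
          have h2b : b ≤ -s := by
            rw [hb]
            have := mul_le_mul_of_nonneg_left (show x - 3/2 ≤ (-1:ℝ) by linarith) hspos.le
            linarith
          have : Real.exp b ≤ Real.exp (-s) := Real.exp_le_exp.mpr h2b
          linarith
        have habs2 : |sigmoid a - sigmoid b| ≤ sigmoid a + sigmoid b := by
          rw [abs_le]; constructor <;> nlinarith [sigmoid_pos a, sigmoid_pos b]
        calc |sigmoid a - sigmoid b| ≤ 2 * Real.exp (-s) := by linarith
          _ ≤ C * Real.exp (-s) := by
              have h2C : (2:ℝ) ≤ C := by rw [hC]; linarith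
              exact mul_le_mul_of_nonneg_right h2C (Real.exp_pos (-s)).le
  | (j+1) =>
    have hj : j ∈ Finset.range k := Finset.mem_range.mpr (by omega)
    have hFj : F j ≤ ∑ i ∈ Finset.range k, F i :=
      Finset.single_le_sum (fun i _ => (hFpos i).le) hj
    have hFC : 2 * F j ≤ C := by rw [hC]; linarith
    have hfa := hF j a
    have hfb := hF j b
    have hdiff : |iteratedDeriv (j+1) sigmoid a - iteratedDeriv (j+1) sigmoid b| ≤
        F j * Real.exp (-|a|) + F j * Real.exp (-|b|) :=
      le_trans (abs_sub _ _) (add_le_add hfa hfb)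
    have hsn' : (0:ℝ) < s ^ (j+1) := pow_pos hspos (j+1)
    constructor
    · have h1 : Real.exp (-|a|) ≤ 1 := Real.exp_le_one_iff.mpr (neg_nonpos.mpr (abs_nonneg a))
      have h2 : Real.exp (-|b|) ≤ 1 := Real.exp_le_one_iff.mpr (neg_nonpos.mpr (abs_nonneg b))
      calc s ^ (j+1) * |iteratedDeriv (j+1) sigmoid a - iteratedDeriv (j+1) sigmoid b|
          ≤ s ^ (j+1) * (2 * F j) := by
            apply mul_le_mul_of_nonneg_left _ hsn'.le
            have q1 := mul_le_mul_of_nonneg_left h1 (hFpos j).le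
            have q2 := mul_le_mul_of_nonneg_left h2 (hFpos j).le
            linarith
        _ ≤ C * s ^ (j+1) := by
            rw [mul_comm]
            exact mul_le_mul_of_nonneg_right hFC hsn'.le
    · intro hx
      obtain ⟨hA, hB⟩ := habs hx
      have h1 : Real.exp (-|a|) ≤ Real.exp (-s) := Real.exp_le_exp.mpr (by linarith)
      have h2 : Real.exp (-|b|) ≤ Real.exp (-s) := Real.exp_le_exp.mpr (by linarith)
      calc s ^ (j+1) * |iteratedDeriv (j+1) sigmoid a - iteratedDeriv (j+1) sigmoid b|
          ≤ s ^ (j+1) * (2 * F j * Real.exp (-s)) := by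
            apply mul_le_mul_of_nonneg_left _ hsn'.le
            have q1 := mul_le_mul_of_nonneg_left h1 (hFpos j).le
            have q2 := mul_le_mul_of_nonneg_left h2 (hFpos j).le
            linarith
        _ = (2 * F j) * Real.exp (-s) * s ^ (j+1) := by ring
        _ ≤ C * Real.exp (-s) * s ^ (j+1) := by
            apply mul_le_mul_of_nonneg_right _ hsn'.le
            exact mul_le_mul_of_nonneg_right hFC (Real.exp_pos (-s)).le
        _ = C * s ^ (j+1) * Real.exp (-s) := by ring
lemma count_sum {d : ℕ} (u : List (Fin d)) : ∑ l : Fin d, u.count l = u.length := by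
  induction u with
  | nil => simp
  | cons i u ih =>
    have : ∀ l : Fin d, (i :: u).count l = u.count l + if l = i then 1 else 0 := by
      intro l; by_cases h : l = i <;> simp [List.count_cons, h, @eq_comm _ i l]
    simp only [this, Finset.sum_add_distrib, ih, Finset.sum_ite_eq' Finset.univ,
      Finset.mem_univ, if_true, List.length_cons]

/-- Exponential decay of the sigmoid bump functions outside their patch:
for every `d` and `k` there is `C = C(k,d) > 0` such that for all `N ≥ 1`, `s ≥ 1`,
`m ∈ {0,…,N}^d`, every multi-index `α` with `|α| ≤ k` and every `x` with
`‖x - m/N‖_∞ ≥ 1/N`, `|D^α φ^s_m(x)| ≤ C N^k s^k e^{-s}`. -/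
theorem bump_decay_outside_patch (d : ℕ) (hd : 0 < d) (k : ℕ) :
    ∃ C : ℝ, 0 < C ∧
      ∀ N : ℕ, 1 ≤ N → ∀ s : ℝ, 1 ≤ s → ∀ m : Fin d → ℕ, (∀ l, m l ≤ N) →
        ∀ u : List (Fin d), u.length ≤ k →
        ∀ x : Fin d → ℝ, (∃ i, 1 / (N : ℝ) ≤ |x i - (m i : ℝ) / (N : ℝ)|) →
          |multiDeriv u (bump d N s m) x| ≤
            C * (N : ℝ) ^ k * s ^ k * Real.exp (-s) := by
  obtain ⟨Cψ, hCψ, hψ⟩ := psi_bound k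
  set D : ℝ := max Cψ 1 with hD
  have hD1 : (1:ℝ) ≤ D := le_max_right _ _
  have hDC : Cψ ≤ D := le_max_left _ _
  have hDpos : (0:ℝ) < D := lt_of_lt_of_le one_pos hD1
  refine ⟨3 ^ k * D ^ d, by positivity, fun N hN s hs m hm u hu x hx => ?_⟩
  obtain ⟨i, hi⟩ := hx
  have hNpos : (0:ℝ) < (N:ℝ) := by exact_mod_cast hN
  have hspos : (0:ℝ) < s := lt_of_lt_of_le one_pos hs
  have h3N : (1:ℝ) ≤ 3 * (N:ℝ) := by
    have : (1:ℝ) ≤ (N:ℝ) := by exact_mod_cast hN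
    linarith
  rw [multiDeriv_bump]
  rw [Finset.abs_prod]
  set c : Fin d → ℕ := fun l => u.count l with hc
  set b : Fin d → ℝ := fun l =>
    (D * ((3 * (N:ℝ)) ^ (c l) * s ^ (c l))) * (if l = i then Real.exp (-s) else 1) with hb
  have hck : ∀ l, c l ≤ k := fun l => le_trans List.count_le_length hu
  have hfac : ∀ l : Fin d,
      |(3 * (N : ℝ)) ^ (c l) *
        iteratedDeriv (c l) (psiSig s) (3 * (N : ℝ) * (x l - (m l : ℝ) / (N : ℝ)))| ≤ b l := by
    intro l
    rw [abs_mul, abs_pow, abs_of_nonneg (by linarith : (0:ℝ) ≤ 3 * (N:ℝ))]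
    by_cases hl : l = i
    · subst hl
      have harg : 3 ≤ |3 * (N:ℝ) * (x l - (m l : ℝ) / (N:ℝ))| := by
        rw [abs_mul, abs_of_nonneg (by linarith : (0:ℝ) ≤ 3 * (N:ℝ))]
        calc (3:ℝ) = 3 * (N:ℝ) * (1 / (N:ℝ)) := by field_simp
          _ ≤ 3 * (N:ℝ) * |x l - (m l : ℝ) / (N:ℝ)| := by
              apply mul_le_mul_of_nonneg_left hi (by linarith)
      have h1 := (hψ s hs (c l) (hck l) _).2 harg
      simp only [hb]
      rw [if_true]
      calc (3 * (N:ℝ)) ^ (c l) * |iteratedDeriv (c l) (psiSig s) _|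
          ≤ (3 * (N:ℝ)) ^ (c l) * (Cψ * s ^ (c l) * Real.exp (-s)) :=
            mul_le_mul_of_nonneg_left h1 (by positivity)
        _ ≤ (3 * (N:ℝ)) ^ (c l) * (D * s ^ (c l) * Real.exp (-s)) := by
            apply mul_le_mul_of_nonneg_left _ (by positivity)
            exact mul_le_mul_of_nonneg_right
              (mul_le_mul_of_nonneg_right hDC (pow_pos hspos _).le) (Real.exp_pos (-s)).le
        _ = D * ((3 * (N:ℝ)) ^ (c l) * s ^ (c l)) * Real.exp (-s) := by ring
    · have h1 := (hψ s hs (c l) (hck l) (3 * (N : ℝ) * (x l - (m l : ℝ) / (N : ℝ)))).1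
      simp only [hb]
      rw [if_neg hl, mul_one]
      calc (3 * (N:ℝ)) ^ (c l) * |iteratedDeriv (c l) (psiSig s) _|
          ≤ (3 * (N:ℝ)) ^ (c l) * (Cψ * s ^ (c l)) :=
            mul_le_mul_of_nonneg_left h1 (by positivity)
        _ ≤ (3 * (N:ℝ)) ^ (c l) * (D * s ^ (c l)) := by
            exact mul_le_mul_of_nonneg_left
              (mul_le_mul_of_nonneg_right hDC (pow_pos hspos _).le) (by positivity)
        _ = D * ((3 * (N:ℝ)) ^ (c l) * s ^ (c l)) := by ring
  have hprod : (∏ l : Fin d,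
      |(3 * (N : ℝ)) ^ (c l) *
        iteratedDeriv (c l) (psiSig s) (3 * (N : ℝ) * (x l - (m l : ℝ) / (N : ℝ)))|) ≤
      ∏ l : Fin d, b l :=
    Finset.prod_le_prod (fun l _ => abs_nonneg _) (fun l _ => hfac l)
  refine le_trans hprod ?_
  have hbeq : (∏ l : Fin d, b l) =
      D ^ d * ((3 * (N:ℝ)) ^ (∑ l : Fin d, c l) * s ^ (∑ l : Fin d, c l)) *
        Real.exp (-s) := by
    simp only [hb]
    rw [Finset.prod_mul_distrib, Finset.prod_mul_distrib, Finset.prod_mul_distrib]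
    rw [Finset.prod_const, Finset.card_univ, Fintype.card_fin]
    rw [Finset.prod_pow_eq_pow_sum, Finset.prod_pow_eq_pow_sum]
    rw [Finset.prod_ite_eq' Finset.univ i (fun _ => Real.exp (-s))]
    simp
  rw [hbeq, count_sum u]
  have hL : u.length ≤ k := hu
  calc D ^ d * ((3 * (N:ℝ)) ^ u.length * s ^ u.length) * Real.exp (-s)
      ≤ D ^ d * ((3 * (N:ℝ)) ^ k * s ^ k) * Real.exp (-s) := by
        apply mul_le_mul_of_nonneg_right _ (Real.exp_pos (-s)).le
        apply mul_le_mul_of_nonneg_left _ (by positivity)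
        exact mul_le_mul (pow_le_pow_right₀ h3N hL) (pow_le_pow_right₀ hs hL)
          (by positivity) (by positivity)
    _ = 3 ^ k * D ^ d * (N:ℝ) ^ k * s ^ k * Real.exp (-s) := by
        rw [mul_pow]; ring
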